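/- For every N > 1, every element of ZMod N is the sum of at most three units of ZMod N. -/

import Mathlib

/-- `c` is a sum of exactly two units. -/
def SumTwoUnits {N : ℕ} (c : ZMod N) : Prop :=
  ∃ x y : ZMod N, IsUnit x ∧ IsUnit y ∧ c = x + y

/-- `c` is a sum of exactly three units. -/
def SumThreeUnits {N : ℕ} (c : ZMod N) : Prop :=
  ∃ x y z : ZMod N, IsUnit x ∧ IsUnit y ∧ IsUnit z ∧ c = x + y + z

lemma sumThree_of_sumTwo_pred {N : ℕ} {c : ZMod N} (h : SumTwoUnits (c - 1)) :
    SumThreeUnits c := by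
  obtain ⟨x, y, hx, hy, hxy⟩ := h
  exact ⟨x, y, 1, hx, hy, isUnit_one, by rw [← hxy]; ring⟩

lemma isUnit_pair {M N : Type*} [Monoid M] [Monoid N] {a : M} {b : N}
    (ha : IsUnit a) (hb : IsUnit b) : IsUnit ((a, b) : M × N) := by
  obtain ⟨u, hu⟩ := ha
  obtain ⟨v, hv⟩ := hb
  exact ⟨MulEquiv.prodUnits.symm (u, v), by simp [MulEquiv.prodUnits, hu, hv]⟩

lemma isUnit_pp_iff {p n : ℕ} (hp : p.Prime) (hn : n ≠ 0) (x : ZMod (p ^ n)) :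
    IsUnit x ↔ (ZMod.castHom (dvd_pow_self p hn) (ZMod p)) x ≠ 0 := by
  haveI : Fact p.Prime := ⟨hp⟩
  haveI : NeZero (p ^ n) := ⟨pow_ne_zero _ hp.pos.ne'⟩
  constructor
  · intro h
    exact (h.map (ZMod.castHom (dvd_pow_self p hn) (ZMod p))).ne_zero
  · intro h
    rw [← ZMod.natCast_zmod_val x, ZMod.isUnit_iff_coprime,
      Nat.coprime_pow_right_iff (Nat.pos_of_ne_zero hn), Nat.coprime_comm,
      hp.coprime_iff_not_dvd]
    intro hdvd
    apply h
    have : (ZMod.castHom (dvd_pow_self p hn) (ZMod p)) x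
        = ((x.val : ℕ) : ZMod p) := by
      conv_lhs => rw [← ZMod.natCast_zmod_val x]
      rw [map_natCast]
    rw [this, ZMod.natCast_eq_zero_iff]
    exact hdvd

lemma sumTwo_pp_odd {p n : ℕ} (hp : p.Prime) (hodd : p ≠ 2) (hn : n ≠ 0)
    (c : ZMod (p ^ n)) : SumTwoUnits c := by
  haveI : Fact p.Prime := ⟨hp⟩
  set π := ZMod.castHom (dvd_pow_self p hn) (ZMod p) with hπ
  by_cases h1 : π (c - 1) ≠ 0
  · exact ⟨c - 1, 1, (isUnit_pp_iff hp hn _).mpr h1, isUnit_one, by ring⟩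
  · push_neg at h1
    have hc : π c = 1 := by
      have := h1
      rw [map_sub, map_one, sub_eq_zero] at this
      exact this
    have h2 : (2 : ZMod p) ≠ 0 := by
      have : ((2 : ℕ) : ZMod p) ≠ 0 := by
        rw [Ne, ZMod.natCast_eq_zero_iff]
        intro hd
        exact hodd ((Nat.prime_dvd_prime_iff_eq hp Nat.prime_two).mp hd)
      simpa using this
    refine ⟨c - 2, 2, (isUnit_pp_iff hp hn _).mpr ?_, (isUnit_pp_iff hp hn _).mpr ?_, by ring⟩
    · rw [map_sub, hc]
      rw [show π (2 : ZMod (p ^ n)) = (2 : ZMod p) by rw [map_ofNat]]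
      intro h
      have h4 : (1 : ZMod p) = 0 := by linear_combination -h
      exact one_ne_zero h4
    · rw [show π (2 : ZMod (p ^ n)) = (2 : ZMod p) by rw [map_ofNat]]
      exact h2

theorem key (N : ℕ) : 1 < N → ∀ c : ZMod N,
    (SumTwoUnits c ∧ SumThreeUnits c) ∨ (2 ∣ N ∧ (SumTwoUnits c ∨ SumThreeUnits c)) := by
  induction N using Nat.recOnPosPrimePosCoprime with
  | prime_pow p n hp hn =>
    intro _ c
    rcases eq_or_ne p 2 with rfl | hodd
    · haveI : Fact (Nat.Prime 2) := ⟨Nat.prime_two⟩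
      right
      refine ⟨dvd_pow_self 2 hn.ne', ?_⟩
      set π := ZMod.castHom (dvd_pow_self 2 hn.ne') (ZMod 2) with hπ
      by_cases h : π c = 0
      · left
        refine ⟨c - 1, 1, (isUnit_pp_iff Nat.prime_two hn.ne' _).mpr ?_, isUnit_one, by ring⟩
        rw [map_sub, h, map_one, zero_sub]
        exact neg_ne_zero.mpr one_ne_zero
      · right
        refine ⟨c - 2, 1, 1, (isUnit_pp_iff Nat.prime_two hn.ne' _).mpr ?_, isUnit_one,
          isUnit_one, by ring⟩
        rw [map_sub]
        have h20 : ((2 : ℕ) : ZMod 2) = 0 := ZMod.natCast_self 2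
        have hcast : (2 : ZMod (2 ^ n)) = ((2 : ℕ) : ZMod (2 ^ n)) := by norm_cast
        have : π (2 : ZMod (2 ^ n)) = 0 := by
          rw [hcast, map_natCast]; exact h20
        rw [this, sub_zero]
        exact h
    · left
      exact ⟨sumTwo_pp_odd hp hodd hn.ne' c,
        sumThree_of_sumTwo_pred (sumTwo_pp_odd hp hodd hn.ne' (c - 1))⟩
  | zero => intro h; omega
  | one => intro h; omega
  | coprime a b ha hb hco iha ihb =>
    intro _ c
    have e := ZMod.chineseRemainder hco
    have hc : c = e.symm (e c) := (e.symm_apply_apply c).symm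
    have two : ∀ x1 : ZMod a, ∀ x2 : ZMod b, SumTwoUnits x1 → SumTwoUnits x2 →
        SumTwoUnits (e.symm (x1, x2)) := by
      intro x1 x2 ⟨u1, v1, hu1, hv1, h1⟩ ⟨u2, v2, hu2, hv2, h2⟩
      refine ⟨e.symm (u1, u2), e.symm (v1, v2), (isUnit_pair hu1 hu2).map e.symm,
        (isUnit_pair hv1 hv2).map e.symm, ?_⟩
      rw [← map_add]
      congr 1
      exact Prod.ext h1 h2
    have three : ∀ x1 : ZMod a, ∀ x2 : ZMod b, SumThreeUnits x1 → SumThreeUnits x2 →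
        SumThreeUnits (e.symm (x1, x2)) := by
      intro x1 x2 ⟨u1, v1, w1, hu1, hv1, hw1, h1⟩ ⟨u2, v2, w2, hu2, hv2, hw2, h2⟩
      refine ⟨e.symm (u1, u2), e.symm (v1, v2), e.symm (w1, w2),
        (isUnit_pair hu1 hu2).map e.symm, (isUnit_pair hv1 hv2).map e.symm,
        (isUnit_pair hw1 hw2).map e.symm, ?_⟩
      rw [← map_add, ← map_add]
      congr 1
      exact Prod.ext h1 h2
    obtain h1 := iha ha (e c).1
    obtain h2 := ihb hb (e c).2
    rcases h1 with ⟨h1two, h1three⟩ | ⟨hda, h1⟩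
    · rcases h2 with ⟨h2two, h2three⟩ | ⟨hdb, h2⟩
      · left
        constructor
        · rw [hc]; exact two _ _ h1two h2two
        · rw [hc]; exact three _ _ h1three h2three
      · right
        refine ⟨Dvd.dvd.mul_left hdb a, ?_⟩
        rcases h2 with h2 | h2
        · left; rw [hc]; exact two _ _ h1two h2
        · right; rw [hc]; exact three _ _ h1three h2
    · rcases h2 with ⟨h2two, h2three⟩ | ⟨hdb, h2⟩
      · right
        refine ⟨Dvd.dvd.mul_right hda b, ?_⟩
        rcases h1 with h1 | h1
        · left; rw [hc]; exact two _ _ h1 h2two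
        · right; rw [hc]; exact three _ _ h1 h2three
      · exfalso
        have : (2 : ℕ) ∣ Nat.gcd a b := Nat.dvd_gcd hda hdb
        rw [hco] at this
        omega

theorem sum_of_at_most_three_units (N : ℕ) (hN : 1 < N) (c : ZMod N) :
    (∃ a : (ZMod N)ˣ, c = (a : ZMod N)) ∨
    (∃ a b : (ZMod N)ˣ, c = (a : ZMod N) + (b : ZMod N)) ∨
    (∃ a b d : (ZMod N)ˣ, c = (a : ZMod N) + (b : ZMod N) + (d : ZMod N)) := by
  have h := key N hN c
  have h2 : SumTwoUnits c ∨ SumThreeUnits c := by tauto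
  rcases h2 with ⟨x, y, hx, hy, hxy⟩ | ⟨x, y, z, hx, hy, hz, hxyz⟩
  · right; left
    exact ⟨hx.unit, hy.unit, by simp [hxy]⟩
  · right; right
    exact ⟨hx.unit, hy.unit, hz.unit, by simp [hxyz]⟩
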